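/- Let n be a positive integer that is not a perfect square, and write n = m·r² with m squarefree (so m ≥ 2). Then g(n) ≤ m·r² + m·r + r + 1. -/

import Mathlib

/-- `Corr n k` says there is a square-product sequence (a nonempty finite set of
positive integers whose product is a perfect square) with least term `n` and
greatest term `k`. -/
def Corr (n k : ℕ) : Prop :=
  ∃ S : Finset ℕ, (∀ a ∈ S, 0 < a) ∧ IsSquare (∏ a ∈ S, a) ∧
    n ∈ S ∧ k ∈ S ∧ ∀ a ∈ S, n ≤ a ∧ a ≤ k

/-- Ron Graham's sequence: the least `k` such that there is a square-product
sequence with least term `n` and greatest term `k`. -/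
noncomputable def g (n : ℕ) : ℕ := sInf {k | Corr n k}

theorem g_upper_bound (n m r : ℕ) (hn : 0 < n) (hns : ¬ IsSquare n)
    (hnmr : n = m * r ^ 2) (hm : Squarefree m) :
    g n ≤ m * r ^ 2 + m * r + r + 1 := by
  subst hnmr
  have hr : 0 < r := by
    rcases Nat.eq_zero_or_pos r with h | h
    · simp [h] at hn
    · exact h
  have hm0 : 0 < m := by
    rcases Nat.eq_zero_or_pos m with h | h
    · simp [h] at hn
    · exact h
  have hm2 : 2 ≤ m := by
    rcases Nat.lt_or_ge m 2 with h | h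
    · interval_cases m
      · exact absurd ⟨r, by ring⟩ hns
    · exact h
  have hrm : r < m * r := by nlinarith
  apply Nat.sInf_le
  refine ⟨{m * r ^ 2, m * r ^ 2 + r, m * r ^ 2 + m * r, m * r ^ 2 + m * r + r + 1},
    ?_, ?_, ?_, ?_, ?_⟩
  · intro a ha
    simp only [Finset.mem_insert, Finset.mem_singleton] at ha
    have : 0 < m * r ^ 2 := hn
    rcases ha with h | h | h | h <;> omega
  · have h1 : m * r ^ 2 ≠ m * r ^ 2 + r := by omega
    have h2 : m * r ^ 2 ≠ m * r ^ 2 + m * r := by omega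
    have h3 : m * r ^ 2 ≠ m * r ^ 2 + m * r + r + 1 := by omega
    have h4 : m * r ^ 2 + r ≠ m * r ^ 2 + m * r := by omega
    have h5 : m * r ^ 2 + r ≠ m * r ^ 2 + m * r + r + 1 := by omega
    have h6 : m * r ^ 2 + m * r ≠ m * r ^ 2 + m * r + r + 1 := by omega
    rw [Finset.prod_insert (by simp [h1, h2, h3]; omega),
        Finset.prod_insert (by simp [h4, h5]; omega),
        Finset.prod_insert (by simp [h6]),
        Finset.prod_singleton]
    exact ⟨m * r ^ 2 * (m * r + 1) * (r + 1), by ring⟩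
  · simp
  · simp
  · intro a ha
    simp only [Finset.mem_insert, Finset.mem_singleton] at ha
    rcases ha with h | h | h | h <;> omega
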